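/- arXiv:1304.2297 — 3 statements merged into one kernel-verified Lean document; each statement's English description precedes it below -/
import Mathlib

section
/- Let D ⊂ ℝ² be a bounded domain and let k > 0. If ∫_D e^{ik α·x} dx = 0 for every α ∈ S¹ (the unit circle in ℝ²), then ∫_D e^{ik (z₁ x₁ + z₂ x₂)} dx = 0 for every z = (z₁, z₂) ∈ ℂ² satisfying z₁² + z₂² = 1. -/
open MeasureTheory Complex Metric

set_option maxHeartbeats 1000000

private lemma abs_ccos_le (w : ℂ) : ‖Complex.cos w‖ ≤ Real.exp ‖w‖ := by
  have h1 : ‖Complex.exp (w * I)‖ ≤ Real.exp ‖w‖ := by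
    rw [Complex.norm_exp]
    exact Real.exp_le_exp.2 ((Complex.re_le_norm _).trans (by simp))
  have h2 : ‖Complex.exp (-w * I)‖ ≤ Real.exp ‖w‖ := by
    rw [Complex.norm_exp]
    refine Real.exp_le_exp.2 ((Complex.re_le_norm _).trans ?_)
    simp
  calc ‖Complex.cos w‖ = ‖Complex.exp (w * I) + Complex.exp (-w * I)‖ / 2 := by
        rw [Complex.cos]; simp
    _ ≤ (Real.exp ‖w‖ + Real.exp ‖w‖) / 2 := by
        gcongr
        exact (norm_add_le _ _).trans (by gcongr)
    _ = Real.exp ‖w‖ := by ring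

private lemma abs_csin_le (w : ℂ) : ‖Complex.sin w‖ ≤ Real.exp ‖w‖ := by
  have h1 : ‖Complex.exp (w * I)‖ ≤ Real.exp ‖w‖ := by
    rw [Complex.norm_exp]
    exact Real.exp_le_exp.2 ((Complex.re_le_norm _).trans (by simp))
  have h2 : ‖Complex.exp (-w * I)‖ ≤ Real.exp ‖w‖ := by
    rw [Complex.norm_exp]
    refine Real.exp_le_exp.2 ((Complex.re_le_norm _).trans ?_)
    simp
  calc ‖Complex.sin w‖ = ‖Complex.exp (-w * I) - Complex.exp (w * I)‖ / 2 := by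
        rw [Complex.sin]; simp
    _ ≤ (Real.exp ‖w‖ + Real.exp ‖w‖) / 2 := by
        gcongr
        exact (norm_sub_le _ _).trans (by gcongr)
    _ = Real.exp ‖w‖ := by ring

/-- Lemma 2: if `∫_D e^{ik α·x} dx = 0` for every `α` in the unit circle `S¹ ⊂ ℝ²`,
then `∫_D e^{ik (z₁x₁ + z₂x₂)} dx = 0` for every `z = (z₁, z₂) ∈ ℂ²` with
`z₁² + z₂² = 1`.  Here `D ⊂ ℝ²` is a bounded domain and `k > 0`. -/
theorem integral_exp_vanishes_on_complexified_sphere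
    (D : Set (EuclideanSpace ℝ (Fin 2)))
    (hD_open : IsOpen D) (hD_conn : IsConnected D)
    (hD_bdd : Bornology.IsBounded D)
    (k : ℝ) (hk : 0 < k)
    (h : ∀ α : EuclideanSpace ℝ (Fin 2), ‖α‖ = 1 →
      ∫ x in D, Complex.exp (Complex.I * k * ((inner ℝ α x : ℝ) : ℂ)) = 0) :
    ∀ z₁ z₂ : ℂ, z₁ ^ 2 + z₂ ^ 2 = 1 →
      ∫ x in D, Complex.exp (Complex.I * k * (z₁ * (x 0 : ℝ) + z₂ * (x 1 : ℝ))) = 0 := by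
  intro z₁ z₂ hz
  -- the measure
  set μ : Measure (EuclideanSpace ℝ (Fin 2)) := volume.restrict D with hμdef
  haveI : IsFiniteMeasure μ := ⟨by
    rw [hμdef, Measure.restrict_apply_univ]; exact hD_bdd.measure_lt_top⟩
  -- bound on D
  obtain ⟨R₀, hR₀⟩ := hD_bdd.exists_norm_le
  set R : ℝ := max R₀ 1 with hRdef
  have hR1 : (1:ℝ) ≤ R := le_max_right _ _
  have hR0 : (0:ℝ) < R := lt_of_lt_of_le one_pos hR1
  have hRx : ∀ x ∈ D, ‖x‖ ≤ R := fun x hx => (hR₀ x hx).trans (le_max_left _ _)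
  have hcoord : ∀ (x : EuclideanSpace ℝ (Fin 2)) (i : Fin 2), |x i| ≤ ‖x‖ := by
    intro x i
    rw [EuclideanSpace.norm_eq, ← Real.sqrt_sq (abs_nonneg (x i))]
    apply Real.sqrt_le_sqrt
    have := Finset.single_le_sum (f := fun j => ‖x j‖ ^ 2)
      (fun j _ => sq_nonneg _) (Finset.mem_univ i)
    simpa [Real.norm_eq_abs, sq_abs] using this
  -- the entire function
  set g : ℂ → ℂ := fun w =>
    ∫ x in D, Complex.exp (Complex.I * k * (Complex.cos w * (x 0 : ℝ) + Complex.sin w * (x 1 : ℝ)))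
    with hgdef
  -- continuity in x
  have hcont : ∀ w : ℂ, Continuous fun x : EuclideanSpace ℝ (Fin 2) =>
      Complex.exp (Complex.I * k * (Complex.cos w * (x 0 : ℝ) + Complex.sin w * (x 1 : ℝ))) := by
    intro w
    fun_prop
  -- differentiability
  have hdiff : Differentiable ℂ g := by
    intro w₀
    set C : ℝ := Real.exp (‖w₀‖ + 1) with hCdef
    have hC1 : (1:ℝ) ≤ C := by
      rw [hCdef]; nlinarith [Real.add_one_le_exp (‖w₀‖ + 1), norm_nonneg w₀]
    have hC0 : (0:ℝ) < C := lt_of_lt_of_le one_pos hC1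
    set B : ℝ := k * (2 * C * R) * Real.exp (k * (2 * C * R)) with hBdef
    have key := hasDerivAt_integral_of_dominated_loc_of_deriv_le (μ := μ)
      (F := fun w (x : EuclideanSpace ℝ (Fin 2)) =>
        Complex.exp (Complex.I * k * (Complex.cos w * (x 0 : ℝ) + Complex.sin w * (x 1 : ℝ))))
      (F' := fun w (x : EuclideanSpace ℝ (Fin 2)) =>
        Complex.exp (Complex.I * k * (Complex.cos w * (x 0 : ℝ) + Complex.sin w * (x 1 : ℝ))) *
          (Complex.I * k * (-Complex.sin w * (x 0 : ℝ) + Complex.cos w * (x 1 : ℝ))))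
      (x₀ := w₀) (bound := fun _ => B) (s := ball w₀ 1) (ball_mem_nhds w₀ one_pos)
      (Filter.Eventually.of_forall fun w => (hcont w).aestronglyMeasurable)
      ?_ ?_ ?_ (integrable_const B) ?_
    · exact ⟨_, key.2⟩
    · -- integrability of F w₀
      refine ⟨(hcont w₀).aestronglyMeasurable, ?_⟩
      refine HasFiniteIntegral.of_bounded (C := Real.exp (k * (2 * C * R))) ?_
      rw [hμdef]
      filter_upwards [ae_restrict_mem hD_open.measurableSet] with x hx
      have hx0 : |x 0| ≤ R := (hcoord x 0).trans (hRx x hx)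
      have hx1 : |x 1| ≤ R := (hcoord x 1).trans (hRx x hx)
      have hc : ‖Complex.cos w₀‖ ≤ C := (abs_ccos_le w₀).trans
        (Real.exp_le_exp.2 (by linarith))
      have hs : ‖Complex.sin w₀‖ ≤ C := (abs_csin_le w₀).trans
        (Real.exp_le_exp.2 (by linarith))
      rw [Complex.norm_exp]
      refine Real.exp_le_exp.2 ((Complex.re_le_norm _).trans ?_)
      calc ‖Complex.I * k * (Complex.cos w₀ * (x 0 : ℝ) + Complex.sin w₀ * (x 1 : ℝ))‖
          ≤ ‖Complex.I * (k:ℂ)‖ * (‖Complex.cos w₀ * ((x 0 : ℝ):ℂ)‖ + ‖Complex.sin w₀ * ((x 1 : ℝ):ℂ)‖) := by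
            rw [norm_mul]; gcongr; exact norm_add_le _ _
        _ ≤ k * (C * R + C * R) := by
            simp only [norm_mul, Complex.norm_I, Complex.norm_real, Real.norm_eq_abs,
              one_mul, abs_of_pos hk]
            gcongr
        _ = k * (2 * C * R) := by ring
    · exact ((hcont w₀).mul (by fun_prop)).aestronglyMeasurable
    · -- the uniform bound on the derivative
      rw [hμdef]
      filter_upwards [ae_restrict_mem hD_open.measurableSet] with x hx
      intro w hw
      have hx0 : |x 0| ≤ R := (hcoord x 0).trans (hRx x hx)
      have hx1 : |x 1| ≤ R := (hcoord x 1).trans (hRx x hx)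
      have hwle : ‖w‖ ≤ ‖w₀‖ + 1 := by
        have := mem_ball_iff_norm.mp hw
        calc ‖w‖ = ‖w₀ + (w - w₀)‖ := by ring_nf
          _ ≤ ‖w₀‖ + ‖w - w₀‖ := norm_add_le _ _
          _ ≤ ‖w₀‖ + 1 := by linarith
      have hc : ‖Complex.cos w‖ ≤ C := (abs_ccos_le w).trans (Real.exp_le_exp.2 hwle)
      have hs : ‖Complex.sin w‖ ≤ C := (abs_csin_le w).trans (Real.exp_le_exp.2 hwle)
      have hlin : ∀ a b : ℂ, ‖a‖ ≤ C → ‖b‖ ≤ C →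
          ‖Complex.I * k * (a * ((x 0 : ℝ):ℂ) + b * ((x 1 : ℝ):ℂ))‖ ≤ k * (2 * C * R) := by
        intro a b ha hb
        calc ‖Complex.I * k * (a * ((x 0 : ℝ):ℂ) + b * ((x 1 : ℝ):ℂ))‖
            ≤ ‖Complex.I * (k:ℂ)‖ * (‖a * ((x 0 : ℝ):ℂ)‖ + ‖b * ((x 1 : ℝ):ℂ)‖) := by
              rw [norm_mul]; gcongr; exact norm_add_le _ _
          _ ≤ k * (C * R + C * R) := by
              simp only [norm_mul, Complex.norm_I, Complex.norm_real, Real.norm_eq_abs,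
                one_mul, abs_of_pos hk]
              gcongr
          _ = k * (2 * C * R) := by ring
      rw [norm_mul, hBdef]
      have h1 : ‖Complex.exp (Complex.I * k * (Complex.cos w * (x 0 : ℝ) + Complex.sin w * (x 1 : ℝ)))‖
          ≤ Real.exp (k * (2 * C * R)) := by
        rw [Complex.norm_exp]
        exact Real.exp_le_exp.2 ((Complex.re_le_norm _).trans
          (by exact hlin _ _ hc hs))
      have h2 : ‖Complex.I * k * (-Complex.sin w * (x 0 : ℝ) + Complex.cos w * (x 1 : ℝ))‖
          ≤ k * (2 * C * R) := hlin _ _ (by simpa using hs) hc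
      calc ‖Complex.exp _‖ * ‖Complex.I * k * (-Complex.sin w * (x 0 : ℝ) + Complex.cos w * (x 1 : ℝ))‖
          ≤ Real.exp (k * (2 * C * R)) * (k * (2 * C * R)) := by
            apply mul_le_mul h1 h2 (norm_nonneg _) (Real.exp_nonneg _)
        _ = k * (2 * C * R) * Real.exp (k * (2 * C * R)) := by ring
    · -- differentiability of the integrand in w
      refine Filter.Eventually.of_forall fun x => fun w _ => ?_
      have hinner : HasDerivAt
          (fun w => Complex.I * k * (Complex.cos w * (x 0 : ℝ) + Complex.sin w * (x 1 : ℝ)))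
          (Complex.I * k * (-Complex.sin w * (x 0 : ℝ) + Complex.cos w * (x 1 : ℝ))) w := by
        exact (((Complex.hasDerivAt_cos w).mul_const ((x 0 : ℝ):ℂ)).add
          ((Complex.hasDerivAt_sin w).mul_const ((x 1 : ℝ):ℂ))).const_mul (Complex.I * k)
      exact hinner.cexp
  -- g is analytic on ℂ
  have hana : AnalyticOnNhd ℂ g Set.univ :=
    hdiff.differentiableOn.analyticOnNhd isOpen_univ
  -- g vanishes on the reals
  have hreal : ∀ t : ℝ, g (t : ℂ) = 0 := by
    intro t
    set α : EuclideanSpace ℝ (Fin 2) := !₂[Real.cos t, Real.sin t] with hα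
    have hα0 : α 0 = Real.cos t := rfl
    have hα1 : α 1 = Real.sin t := rfl
    have hnorm : ‖α‖ = 1 := by
      rw [EuclideanSpace.norm_eq]
      simp [Fin.sum_univ_two, hα0, hα1, Real.cos_sq_add_sin_sq]
    have h0 := h α hnorm
    rw [hgdef]
    rw [← h0]
    apply integral_congr_ae
    refine Filter.Eventually.of_forall fun x => ?_
    have hinner : (inner ℝ α x : ℝ) = Real.cos t * x 0 + Real.sin t * x 1 := by
      simp [PiLp.inner_apply, Fin.sum_univ_two, hα0, hα1, RCLike.inner_apply]
      ring
    simp only [hinner]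
    push_cast [Complex.ofReal_cos, Complex.ofReal_sin]
    ring_nf
  -- g vanishes everywhere by the identity theorem
  have hfreq : ∃ᶠ z in nhdsWithin 0 {(0:ℂ)}ᶜ, g z = 0 := by
    have ht : Filter.Tendsto (fun n : ℕ => Complex.ofReal (((n:ℝ)+1)⁻¹)) Filter.atTop
        (nhdsWithin 0 {(0:ℂ)}ᶜ) := by
      rw [tendsto_nhdsWithin_iff]
      constructor
      · have h1 : Filter.Tendsto (fun n : ℕ => ((n:ℝ)+1)⁻¹) Filter.atTop (nhds 0) := by
          simpa [one_div] using tendsto_one_div_add_atTop_nhds_zero_nat (𝕜 := ℝ)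
        have h2 := (Complex.continuous_ofReal.tendsto 0).comp h1
        simpa only [Function.comp_def, Complex.ofReal_zero] using h2
      · refine Filter.Eventually.of_forall fun n => ?_
        simp only [Set.mem_compl_iff, Set.mem_singleton_iff, Complex.ofReal_ne_zero]
        positivity
    exact ht.frequently (Filter.Frequently.of_forall fun n => hreal _)
  have hzero : Set.EqOn g 0 Set.univ :=
    hana.eqOn_zero_of_preconnected_of_frequently_eq_zero isPreconnected_univ
      (Set.mem_univ 0) hfreq
  -- find w with cos w = z₁ and sin w = z₂
  set u : ℂ := z₁ + Complex.I * z₂ with hudef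
  have hmul : u * (z₁ - Complex.I * z₂) = 1 := by
    rw [hudef]; ring_nf; rw [Complex.I_sq]; linear_combination hz
  have hu : u ≠ 0 := by
    intro h0
    rw [h0, zero_mul] at hmul
    exact zero_ne_one hmul
  have hinv : u⁻¹ = z₁ - Complex.I * z₂ := inv_eq_of_mul_eq_one_right hmul
  set w : ℂ := -Complex.I * Complex.log u with hwdef
  have hwI : w * Complex.I = Complex.log u := by
    rw [hwdef]; ring_nf; rw [Complex.I_sq]; ring
  have hexp : Complex.exp (w * Complex.I) = u := by rw [hwI]; exact Complex.exp_log hu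
  have hexpneg : Complex.exp (-w * Complex.I) = u⁻¹ := by
    rw [neg_mul, Complex.exp_neg, hexp]
  have hcos : Complex.cos w = z₁ := by
    rw [Complex.cos, hexp, hexpneg, hinv]; ring
  have hsin : Complex.sin w = z₂ := by
    rw [Complex.sin, hexp, hexpneg, hinv, hudef]
    rw [div_eq_iff (two_ne_zero)]
    ring_nf
    rw [Complex.I_sq]
    ring
  have : g w = 0 := hzero (Set.mem_univ w)
  rw [hgdef] at this
  simp only [hcos, hsin] at this
  exact this
end

section
/- Let D ⊂ ℝ² be a bounded domain that is star-shaped with respect to the origin, whose boundary S is given in polar coordinates by r = f(φ), where f is a smooth 2π-periodic function with 0 < c₁ ≤ f(φ) ≤ c₂ for constants c₁, c₂. Let k > 0. If ∫_D e^{ik α·x} dx = 0 for every α ∈ S¹, then ∫_{-π}^{π} f'(φ) f(φ) e^{ik f(φ) cos(φ − θ)} dφ = 0 for every complex number θ, where cos(φ − θ) is understood via the analytic extension of cosine to ℂ. -/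
open MeasureTheory Real Set

lemma measurableSet_D (f : ℝ → ℝ) (hf : Continuous f) :
    MeasurableSet {z : ℂ | ‖z‖ < f (Complex.arg z)} :=
  measurableSet_lt (continuous_norm.measurable) ((hf.measurable).comp Complex.measurable_arg)

lemma polar_symm_mem (f : ℝ → ℝ) (r φ : ℝ) (hr : 0 < r) (hφ : φ ∈ Ioo (-π) π) :
    (Complex.polarCoord.symm (r, φ) ∈ {z : ℂ | ‖z‖ < f (Complex.arg z)}) ↔ r < f φ := by
  have habs : ‖Complex.polarCoord.symm (r, φ)‖ = r := by
    rw [Complex.norm_polarCoord_symm, abs_of_pos hr]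
  have harg : Complex.arg (Complex.polarCoord.symm (r, φ)) = φ := by
    rw [Complex.polarCoord_symm_apply]
    simp only [Complex.ofReal_cos, Complex.ofReal_sin]
    rw [Complex.arg_real_mul _ hr, Complex.arg_cos_add_sin_mul_I ⟨hφ.1, le_of_lt hφ.2⟩]
  rw [Set.mem_setOf_eq, habs, harg]

lemma polar_change (f : ℝ → ℝ) (hf : Continuous f) (c₂ : ℝ)
    (hfc : ∀ φ, 0 < f φ ∧ f φ ≤ c₂)
    (w : ℂ → ℂ) (hw : Continuous w) (C : ℝ) (hC : ∀ z, ‖z‖ ≤ c₂ → ‖w z‖ ≤ C) :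
    ∫ z in {z : ℂ | ‖z‖ < f (Complex.arg z)}, w z
      = ∫ φ in (-π)..π, ∫ r in (0:ℝ)..f φ, (r:ℂ) * w (Complex.polarCoord.symm (r, φ)) := by
  set D := {z : ℂ | ‖z‖ < f (Complex.arg z)} with hDdef
  have hDm : MeasurableSet D := measurableSet_D f hf
  have hc₂0 : 0 < c₂ := lt_of_lt_of_le (hfc 0).1 (hfc 0).2
  have hC0 : 0 ≤ C := le_trans (norm_nonneg _) (hC 0 (by simp [le_of_lt hc₂0]))
  have htarget : polarCoord.target = Ioi (0:ℝ) ×ˢ Ioo (-π) π := rfl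
  have hsymm_cont : Continuous fun p : ℝ × ℝ => (Complex.polarCoord.symm p : ℂ) := by
    have : (fun p : ℝ × ℝ => (Complex.polarCoord.symm p : ℂ))
        = fun p : ℝ × ℝ => (p.1 : ℂ) * (Real.cos p.2 + Real.sin p.2 * Complex.I) := by
      funext p; rw [Complex.polarCoord_symm_apply]
    rw [this]; continuity
  have step1 : ∫ z in D, w z = ∫ z : ℂ, D.indicator w z := (integral_indicator hDm).symm
  have step2 : ∫ z : ℂ, D.indicator w z
      = ∫ p in polarCoord.target, p.1 • D.indicator w (Complex.polarCoord.symm p) :=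
    (Complex.integral_comp_polarCoord_symm (D.indicator w)).symm
  set F : ℝ × ℝ → ℂ :=
    (polarCoord.target).indicator (fun p => p.1 • D.indicator w (Complex.polarCoord.symm p))
    with hFdef
  have htm : MeasurableSet polarCoord.target := polarCoord.open_target.measurableSet
  have step3 : ∫ p in polarCoord.target, p.1 • D.indicator w (Complex.polarCoord.symm p)
      = ∫ p : ℝ × ℝ, F p := (integral_indicator htm).symm
  have hFmeas : AEStronglyMeasurable F (volume : Measure (ℝ × ℝ)) := by
    apply AEStronglyMeasurable.indicator _ htm
    apply AEStronglyMeasurable.smul measurable_fst.aestronglyMeasurable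
    exact ((hw.measurable.indicator hDm).comp hsymm_cont.measurable).aestronglyMeasurable
  have hFbound : ∀ p : ℝ × ℝ, ‖F p‖ ≤
      (Ioc (0:ℝ) c₂ ×ˢ Icc (-π) π).indicator (fun _ => c₂ * C) p := by
    intro p
    rw [hFdef]
    by_cases hp : p ∈ polarCoord.target
    · rw [Set.indicator_of_mem hp]
      rw [htarget] at hp
      by_cases hmem : Complex.polarCoord.symm p ∈ D
      · have hlt : p.1 < f p.2 := (polar_symm_mem f p.1 p.2 hp.1 hp.2).mp hmem
        have hps : p ∈ Ioc (0:ℝ) c₂ ×ˢ Icc (-π) π :=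
          ⟨⟨hp.1, le_of_lt (lt_of_lt_of_le hlt (hfc p.2).2)⟩,
            ⟨le_of_lt hp.2.1, le_of_lt hp.2.2⟩⟩
        rw [Set.indicator_of_mem hps, Set.indicator_of_mem hmem, norm_smul]
        have h1 : ‖p.1‖ ≤ c₂ := by
          rw [Real.norm_eq_abs, abs_of_pos hp.1]
          exact le_of_lt (lt_of_lt_of_le hlt (hfc p.2).2)
        have h2 : ‖Complex.polarCoord.symm p‖ ≤ c₂ := by
          rw [Complex.norm_polarCoord_symm, abs_of_pos hp.1]
          exact le_of_lt (lt_of_lt_of_le hlt (hfc p.2).2)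
        exact mul_le_mul h1 (hC _ h2) (norm_nonneg _) (le_of_lt hc₂0)
      · rw [Set.indicator_of_notMem hmem]
        simp only [smul_zero, norm_zero]
        exact Set.indicator_nonneg (fun _ _ => mul_nonneg (le_of_lt hc₂0) hC0) p
    · rw [Set.indicator_of_notMem hp]
      simp only [norm_zero]
      exact Set.indicator_nonneg (fun _ _ => mul_nonneg (le_of_lt hc₂0) hC0) p
  have hFint : Integrable F (volume : Measure (ℝ × ℝ)) := by
    apply Integrable.mono' (g := (Ioc (0:ℝ) c₂ ×ˢ Icc (-π) π).indicator (fun _ => c₂ * C))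
    · rw [integrable_indicator_iff ((measurableSet_Ioc).prod measurableSet_Icc)]
      refine integrableOn_const (ne_of_lt ?_)
      refine lt_of_le_of_lt (measure_mono (Set.prod_mono Ioc_subset_Icc_self (subset_refl _))) ?_
      exact (isCompact_Icc.prod isCompact_Icc).measure_lt_top
    · exact hFmeas
    · exact Filter.Eventually.of_forall hFbound
  have step4 : ∫ p : ℝ × ℝ, F p = ∫ φ : ℝ, ∫ r : ℝ, F (r, φ) := by
    rw [Measure.volume_eq_prod] at hFint ⊢
    exact integral_prod_symm F hFint
  have hinner : ∀ φ : ℝ, (∫ r : ℝ, F (r, φ))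
      = (Ioo (-π) π).indicator
          (fun φ => ∫ r in (0:ℝ)..f φ, (r:ℂ) * w (Complex.polarCoord.symm (r, φ))) φ := by
    intro φ
    by_cases hφ : φ ∈ Ioo (-π) π
    · rw [Set.indicator_of_mem hφ]
      have key : ∀ r : ℝ, F (r, φ)
          = (Ioo (0:ℝ) (f φ)).indicator
              (fun r => (r:ℂ) * w (Complex.polarCoord.symm (r, φ))) r := by
        intro r
        rw [hFdef, htarget]
        by_cases hr : 0 < r
        · have hmem : (r, φ) ∈ Ioi (0:ℝ) ×ˢ Ioo (-π) π := ⟨hr, hφ⟩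
          rw [Set.indicator_of_mem hmem]
          by_cases hrf : r < f φ
          · rw [Set.indicator_of_mem ((polar_symm_mem f r φ hr hφ).mpr hrf),
              Set.indicator_of_mem (show r ∈ Ioo (0:ℝ) (f φ) from ⟨hr, hrf⟩)]
            exact Complex.real_smul
          · have h1 : Complex.polarCoord.symm (r, φ) ∉ D := fun hc =>
              hrf ((polar_symm_mem f r φ hr hφ).mp hc)
            have h2 : r ∉ Ioo (0:ℝ) (f φ) := fun hc => hrf hc.2
            rw [Set.indicator_of_notMem h1, Set.indicator_of_notMem h2, smul_zero]
        · have h1 : (r, φ) ∉ Ioi (0:ℝ) ×ˢ Ioo (-π) π := fun hc => hr hc.1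
          have h2 : r ∉ Ioo (0:ℝ) (f φ) := fun hc => hr hc.1
          rw [Set.indicator_of_notMem h1, Set.indicator_of_notMem h2]
      rw [intervalIntegral.integral_of_le (le_of_lt (hfc φ).1),
        integral_Ioc_eq_integral_Ioo, ← integral_indicator measurableSet_Ioo]
      exact integral_congr_ae (Filter.Eventually.of_forall key)
    · rw [Set.indicator_of_notMem hφ]
      have hz : ∀ r : ℝ, F (r, φ) = 0 := by
        intro r
        rw [hFdef, htarget]
        exact Set.indicator_of_notMem (fun hc => hφ hc.2) _
      simp [hz]
  rw [step1, step2, step3, step4]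
  simp_rw [hinner]
  rw [integral_indicator measurableSet_Ioo, ← integral_Ioc_eq_integral_Ioo,
    ← intervalIntegral.integral_of_le (by linarith [Real.pi_pos] : -π ≤ π)]



set_option maxHeartbeats 1000000 in
lemma J_deriv_zero (f : ℝ → ℝ) (hf : Continuous f) (c₂ : ℝ) (hfc : ∀ φ, 0 < f φ ∧ f φ ≤ c₂)
    (k : ℝ) (hk : 0 < k)
    (h : ∀ t : ℝ, ∫ z in {z : ℂ | ‖z‖ < f (Complex.arg z)},
      Complex.exp (Complex.I * k * ((Real.cos t * z.re + Real.sin t * z.im : ℝ) : ℂ)) = 0)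
    (t : ℝ) :
    ∫ z in {z : ℂ | ‖z‖ < f (Complex.arg z)},
      Complex.exp (Complex.I * k * ((Real.cos t * z.re + Real.sin t * z.im : ℝ) : ℂ)) *
        (Complex.I * k * ((-Real.sin t * z.re + Real.cos t * z.im : ℝ) : ℂ)) = 0 := by
  set D := {z : ℂ | ‖z‖ < f (Complex.arg z)} with hDdef
  have hDm : MeasurableSet D := measurableSet_D f hf
  have hc₂0 : 0 < c₂ := lt_of_lt_of_le (hfc 0).1 (hfc 0).2
  have hDsub : D ⊆ Metric.closedBall (0 : ℂ) c₂ := by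
    intro z hz
    rw [Metric.mem_closedBall, Complex.dist_eq, sub_zero]
    exact le_of_lt (lt_of_lt_of_le hz (hfc _).2)
  have hfin : IsFiniteMeasure ((volume : Measure ℂ).restrict D) := by
    constructor
    rw [Measure.restrict_apply_univ]
    exact lt_of_le_of_lt (measure_mono hDsub) (measure_closedBall_lt_top)
  set F : ℝ → ℂ → ℂ := fun x z =>
    Complex.exp (Complex.I * k * ((Real.cos x * z.re + Real.sin x * z.im : ℝ) : ℂ)) with hF
  set F' : ℝ → ℂ → ℂ := fun x z =>
    Complex.exp (Complex.I * k * ((Real.cos x * z.re + Real.sin x * z.im : ℝ) : ℂ)) *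
      (Complex.I * k * ((-Real.sin x * z.re + Real.cos x * z.im : ℝ) : ℂ)) with hF'
  have hFcont : ∀ x, Continuous (F x) := by
    intro x
    apply Complex.continuous_exp.comp
    continuity
  have hF'cont : ∀ x, Continuous (F' x) := by
    intro x
    apply Continuous.mul
    · apply Complex.continuous_exp.comp; continuity
    · continuity
  have hdiff : ∀ z : ℂ, ∀ x : ℝ, HasDerivAt (fun y => F y z) (F' x z) x := by
    intro z x
    have h1 : HasDerivAt (fun y : ℝ => (Real.cos y * z.re + Real.sin y * z.im : ℝ))
        (-Real.sin x * z.re + Real.cos x * z.im) x :=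
      ((Real.hasDerivAt_cos x).mul_const z.re).add ((Real.hasDerivAt_sin x).mul_const z.im)
    exact ((h1.ofReal_comp).const_mul (Complex.I * (k : ℂ))).cexp
  have hexp1 : ∀ (x : ℝ) (z : ℂ),
      ‖Complex.exp (Complex.I * k * ((Real.cos x * z.re + Real.sin x * z.im : ℝ) : ℂ))‖ = 1 := by
    intro x z
    rw [Complex.norm_exp]
    have : (Complex.I * k * ((Real.cos x * z.re + Real.sin x * z.im : ℝ) : ℂ)).re = 0 := by
      simp [Complex.mul_re, Complex.mul_im]
    rw [this, Real.exp_zero]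
  have hbound : ∀ᵐ z ∂((volume : Measure ℂ).restrict D), ∀ x ∈ Metric.ball t 1,
      ‖F' x z‖ ≤ k * (2 * c₂) := by
    filter_upwards [ae_restrict_mem hDm] with z hz
    intro x _
    have hzc : ‖z‖ ≤ c₂ := le_of_lt (lt_of_lt_of_le hz (hfc _).2)
    have hre : |z.re| ≤ c₂ := le_trans (Complex.abs_re_le_norm z) hzc
    have him : |z.im| ≤ c₂ := le_trans (Complex.abs_im_le_norm z) hzc
    have hnorm : ‖F' x z‖ = k * |(-Real.sin x * z.re + Real.cos x * z.im)| := by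
      rw [hF']
      simp only [norm_mul, Complex.norm_I, Complex.norm_real, Real.norm_eq_abs]
      rw [Complex.norm_exp]
      have : (Complex.I * k * ((Real.cos x * z.re + Real.sin x * z.im : ℝ) : ℂ)).re = 0 := by
        simp [Complex.mul_re, Complex.mul_im]
      rw [this, Real.exp_zero]
      rw [abs_of_pos hk]
      ring
    rw [hnorm]
    have b1 : |(-Real.sin x * z.re)| ≤ c₂ := by
      rw [abs_mul, abs_neg]
      calc |Real.sin x| * |z.re| ≤ 1 * c₂ :=
            mul_le_mul (Real.abs_sin_le_one x) hre (abs_nonneg _) zero_le_one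
        _ = c₂ := one_mul c₂
    have b2 : |(Real.cos x * z.im)| ≤ c₂ := by
      rw [abs_mul]
      calc |Real.cos x| * |z.im| ≤ 1 * c₂ :=
            mul_le_mul (Real.abs_cos_le_one x) him (abs_nonneg _) zero_le_one
        _ = c₂ := one_mul c₂
    have b3 : |(-Real.sin x * z.re + Real.cos x * z.im)| ≤ 2 * c₂ := by
      calc |(-Real.sin x * z.re + Real.cos x * z.im)|
          ≤ |(-Real.sin x * z.re)| + |(Real.cos x * z.im)| := abs_add_le _ _
        _ ≤ 2 * c₂ := by linarith
    exact mul_le_mul_of_nonneg_left b3 (le_of_lt hk)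
  have hint : Integrable (F t) ((volume : Measure ℂ).restrict D) :=
    (((hFcont t).continuousOn).integrableOn_compact (isCompact_closedBall (0:ℂ) c₂)).mono_set hDsub
  have key := hasDerivAt_integral_of_dominated_loc_of_deriv_le
    (μ := (volume : Measure ℂ).restrict D) (F := F) (F' := F') (x₀ := t)
    (bound := fun _ => k * (2 * c₂)) (Metric.ball_mem_nhds _ one_pos)
    (Filter.Eventually.of_forall fun x => (hFcont x).aestronglyMeasurable)
    hint
    ((hF'cont t).aestronglyMeasurable)
    hbound
    (integrable_const _)
    (Filter.Eventually.of_forall fun z x _ => hdiff z x)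
  have hzero : HasDerivAt (fun x : ℝ => ∫ z in D, F x z) 0 t := by
    have hconst : (fun x : ℝ => ∫ z in D, F x z) = fun _ => (0 : ℂ) := funext fun x => h x
    rw [hconst]; exact hasDerivAt_const t 0
  exact key.2.unique hzero

lemma norm_exp_I_mul (k x : ℝ) : ‖Complex.exp (Complex.I * k * (x:ℂ))‖ = 1 := by
  rw [Complex.norm_exp]
  have : (Complex.I * k * (x:ℂ)).re = 0 := by simp [Complex.mul_re, Complex.mul_im]
  rw [this, Real.exp_zero]

lemma Htil_deriv (f : ℝ → ℝ) (hf : ContDiff ℝ (⊤:ℕ∞) f) (c₂ : ℝ)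
    (hfc : ∀ φ, 0 < f φ ∧ f φ ≤ c₂) (k t : ℝ) (hk : 0 < k) (φ : ℝ) :
    HasDerivAt (fun ψ : ℝ => ∫ s in (0:ℝ)..1,
        (((f ψ)^2 * s : ℝ) : ℂ) *
          Complex.exp (Complex.I * k * ((f ψ * s * Real.cos (ψ - t) : ℝ) : ℂ)))
      (((deriv f φ * f φ : ℝ) : ℂ) *
          Complex.exp (Complex.I * k * ((f φ * Real.cos (φ - t) : ℝ) : ℂ))
        - ∫ s in (0:ℝ)..1, Complex.I * k * (((f φ)^3 * s^2 * Real.sin (φ - t) : ℝ) : ℂ) *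
            Complex.exp (Complex.I * k * ((f φ * s * Real.cos (φ - t) : ℝ) : ℂ))) φ := by
  have hfd : ∀ x : ℝ, HasDerivAt f (deriv f x) x :=
    fun x => (hf.differentiable (by simp)).differentiableAt.hasDerivAt
  have hderivcont : Continuous (deriv f) := hf.continuous_deriv (mod_cast le_top)
  have hc₂0 : 0 < c₂ := lt_of_lt_of_le (hfc 0).1 (hfc 0).2
  -- the function and its ψ-derivative
  set F : ℝ → ℝ → ℂ := fun ψ s =>
    (((f ψ)^2 * s : ℝ) : ℂ) *
      Complex.exp (Complex.I * k * ((f ψ * s * Real.cos (ψ - t) : ℝ) : ℂ)) with hF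
  set F' : ℝ → ℝ → ℂ := fun ψ s =>
    ((2 * f ψ ^ 1 * deriv f ψ * s : ℝ) : ℂ) *
        Complex.exp (Complex.I * k * ((f ψ * s * Real.cos (ψ - t) : ℝ) : ℂ))
      + (((f ψ)^2 * s : ℝ) : ℂ) *
          (Complex.exp (Complex.I * k * ((f ψ * s * Real.cos (ψ - t) : ℝ) : ℂ)) *
            (Complex.I * k *
              ((deriv f ψ * s * Real.cos (ψ - t) + f ψ * s * (-Real.sin (ψ - t) * 1) : ℝ) : ℂ)))
    with hF'
  have hdiff : ∀ s : ℝ, ∀ ψ : ℝ, HasDerivAt (fun y => F y s) (F' ψ s) ψ := by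
    intro s ψ
    have hu : HasDerivAt (fun y : ℝ => (((f y)^2 * s : ℝ) : ℂ))
        ((2 * f ψ ^ 1 * deriv f ψ * s : ℝ) : ℂ) ψ :=
      (((hfd ψ).pow 2).mul_const s).ofReal_comp
    have hw : HasDerivAt (fun y : ℝ => f y * s * Real.cos (y - t))
        (deriv f ψ * s * Real.cos (ψ - t) + f ψ * s * (-Real.sin (ψ - t) * 1)) ψ := by
      have hcos : HasDerivAt (fun y : ℝ => Real.cos (y - t)) (-Real.sin (ψ - t) * 1) ψ :=
        by have := (Real.hasDerivAt_cos (ψ - t)).comp ψ ((hasDerivAt_id ψ).sub_const t); exact this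
      exact ((hfd ψ).mul_const s).mul hcos
    have hv := ((hw.ofReal_comp).const_mul (Complex.I * (k:ℂ))).cexp
    exact hu.mul hv
  -- continuity in s of F ψ and F' ψ
  have hFcont : ∀ ψ, Continuous (F ψ) := by
    intro ψ; rw [hF]
    apply Continuous.mul
    · fun_prop
    · apply Complex.continuous_exp.comp; fun_prop
  have hF'cont : ∀ ψ, Continuous (F' ψ) := by
    intro ψ; rw [hF']
    apply Continuous.add
    · apply Continuous.mul
      · fun_prop
      · apply Complex.continuous_exp.comp; fun_prop
    · apply Continuous.mul
      · fun_prop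
      · apply Continuous.mul
        · apply Complex.continuous_exp.comp; fun_prop
        · fun_prop
  -- bound for the derivative on ball φ 1
  obtain ⟨M, hM⟩ := (isCompact_Icc (a := φ - 1) (b := φ + 1)).exists_bound_of_continuousOn
    hderivcont.continuousOn
  have hMball : ∀ ψ ∈ Metric.ball φ 1, |deriv f ψ| ≤ M := by
    intro ψ hψ
    apply hM
    have := Metric.ball_subset_closedBall hψ
    rwa [Real.closedBall_eq_Icc] at this
  have hM0 : 0 ≤ M := le_trans (abs_nonneg _) (hMball φ (Metric.mem_ball_self one_pos))
  set C : ℝ := 2 * c₂ * M + c₂ ^ 2 * (k * (M + c₂)) with hC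
  have hbound : ∀ s ∈ Set.uIoc (0:ℝ) 1, ∀ ψ ∈ Metric.ball φ 1, ‖F' ψ s‖ ≤ C := by
    intro s hs ψ hψ
    rw [Set.uIoc_of_le (zero_le_one)] at hs
    have hs0 : 0 < s := hs.1
    have hs1 : s ≤ 1 := hs.2
    have hfb : |f ψ| ≤ c₂ := by
      rw [abs_of_pos (hfc ψ).1]; exact (hfc ψ).2
    have hf'b := hMball ψ hψ
    rw [hF']
    have habs1 : |s| ≤ 1 := by rw [abs_of_pos hs0]; exact hs1
    have e1 : ‖Complex.exp (Complex.I * k * ((f ψ * s * Real.cos (ψ - t) : ℝ) : ℂ))‖ = 1 :=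
      norm_exp_I_mul k _
    refine le_trans (norm_add_le _ _) ?_
    have h1 : ‖((2 * f ψ ^ 1 * deriv f ψ * s : ℝ) : ℂ)‖ ≤ 2 * c₂ * M := by
      rw [Complex.norm_real, Real.norm_eq_abs, abs_mul, abs_mul, abs_mul]
      simp only [pow_one, abs_two]
      calc 2 * |f ψ| * |deriv f ψ| * |s| ≤ 2 * c₂ * M * 1 := by
            apply mul_le_mul _ habs1 (abs_nonneg _) (by positivity)
            exact mul_le_mul (mul_le_mul le_rfl hfb (abs_nonneg _) (by norm_num)) hf'b
              (abs_nonneg _) (by positivity)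
        _ = 2 * c₂ * M := mul_one _
    have h2 : ‖(((f ψ)^2 * s : ℝ) : ℂ)‖ ≤ c₂ ^ 2 := by
      rw [Complex.norm_real, Real.norm_eq_abs, abs_mul]
      calc |(f ψ)^2| * |s| ≤ c₂^2 * 1 := by
            apply mul_le_mul _ habs1 (abs_nonneg _) (by positivity)
            rw [abs_pow]
            exact pow_le_pow_left₀ (abs_nonneg _) hfb 2
        _ = c₂ ^ 2 := mul_one _
    have h3 : ‖Complex.exp (Complex.I * k * ((f ψ * s * Real.cos (ψ - t) : ℝ) : ℂ)) *
        (Complex.I * k *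
          ((deriv f ψ * s * Real.cos (ψ - t) + f ψ * s * (-Real.sin (ψ - t) * 1) : ℝ) : ℂ))‖
        ≤ k * (M + c₂) := by
      rw [norm_mul, e1, one_mul]
      have : ‖Complex.I * (k:ℂ) *
          ((deriv f ψ * s * Real.cos (ψ - t) + f ψ * s * (-Real.sin (ψ - t) * 1) : ℝ) : ℂ)‖
          = k * |deriv f ψ * s * Real.cos (ψ - t) + f ψ * s * (-Real.sin (ψ - t) * 1)| := by
        simp only [norm_mul, Complex.norm_I, Complex.norm_real,
          Real.norm_eq_abs, one_mul]
        rw [abs_of_pos hk]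
      rw [this]
      apply mul_le_mul_of_nonneg_left _ (le_of_lt hk)
      calc |deriv f ψ * s * Real.cos (ψ - t) + f ψ * s * (-Real.sin (ψ - t) * 1)|
          ≤ |deriv f ψ * s * Real.cos (ψ - t)| + |f ψ * s * (-Real.sin (ψ - t) * 1)| := abs_add_le _ _
        _ ≤ M + c₂ := by
            have a1 : |deriv f ψ * s * Real.cos (ψ - t)| ≤ M := by
              rw [abs_mul, abs_mul]
              calc |deriv f ψ| * |s| * |Real.cos (ψ - t)| ≤ M * 1 * 1 := by
                    gcongr
                    exact Real.abs_cos_le_one _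
                _ = M := by ring
            have a2 : |f ψ * s * (-Real.sin (ψ - t) * 1)| ≤ c₂ := by
              rw [abs_mul, abs_mul]
              calc |f ψ| * |s| * |(-Real.sin (ψ - t) * 1)| ≤ c₂ * 1 * 1 := by
                    gcongr
                    rw [mul_one, abs_neg]; exact Real.abs_sin_le_one _
                _ = c₂ := by ring
            linarith
    have t1 : ‖((2 * f ψ ^ 1 * deriv f ψ * s : ℝ) : ℂ) *
        Complex.exp (Complex.I * k * ((f ψ * s * Real.cos (ψ - t) : ℝ) : ℂ))‖ ≤ 2 * c₂ * M := by
      rw [norm_mul, e1, mul_one]; exact h1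
    have t2 : ‖(((f ψ)^2 * s : ℝ) : ℂ) *
        (Complex.exp (Complex.I * k * ((f ψ * s * Real.cos (ψ - t) : ℝ) : ℂ)) *
          (Complex.I * k *
            ((deriv f ψ * s * Real.cos (ψ - t) + f ψ * s * (-Real.sin (ψ - t) * 1) : ℝ) : ℂ)))‖
        ≤ c₂^2 * (k * (M + c₂)) := by
      rw [norm_mul]
      exact mul_le_mul h2 h3 (norm_nonneg _) (by positivity)
    rw [hC]
    exact add_le_add t1 t2
  have key := intervalIntegral.hasDerivAt_integral_of_dominated_loc_of_deriv_le
    (F := F) (F' := F') (x₀ := φ) (bound := fun _ => C) (a := 0) (b := 1)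
    (μ := volume) (Metric.ball_mem_nhds _ one_pos)
    (Filter.Eventually.of_forall fun ψ => (hFcont ψ).aestronglyMeasurable)
    ((hFcont φ).intervalIntegrable 0 1)
    ((hF'cont φ).aestronglyMeasurable)
    (Filter.Eventually.of_forall fun s hs ψ hψ => hbound s hs ψ hψ)
    (intervalIntegrable_const)
    (Filter.Eventually.of_forall fun s _ ψ _ => hdiff s ψ)
  have hder := key.2
  -- now rewrite the value of the derivative
  set W : ℝ → ℂ := fun s =>
    ((f φ * s^2 : ℝ) : ℂ) *
      Complex.exp (Complex.I * k * ((f φ * s * Real.cos (φ - t) : ℝ) : ℂ)) with hWdef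
  set W' : ℝ → ℂ := fun s =>
    ((f φ * (2*s) : ℝ) : ℂ) *
        Complex.exp (Complex.I * k * ((f φ * s * Real.cos (φ - t) : ℝ) : ℂ))
      + ((f φ * s^2 : ℝ) : ℂ) *
          (Complex.exp (Complex.I * k * ((f φ * s * Real.cos (φ - t) : ℝ) : ℂ)) *
            (Complex.I * k * ((f φ * Real.cos (φ - t) : ℝ) : ℂ))) with hW'def
  have hW : ∀ s : ℝ, HasDerivAt W (W' s) s := by
    intro s
    have hu : HasDerivAt (fun s : ℝ => ((f φ * s^2 : ℝ) : ℂ)) ((f φ * (2*s) : ℝ) : ℂ) s := by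
      have h0 : HasDerivAt (fun s : ℝ => f φ * s^2) (f φ * (2*s)) s := by
        simpa using ((hasDerivAt_pow 2 s).const_mul (f φ))
      exact h0.ofReal_comp
    have hw0 : HasDerivAt (fun s : ℝ => f φ * s * Real.cos (φ - t))
        (f φ * Real.cos (φ - t)) s := by
      simpa using ((hasDerivAt_id s).const_mul (f φ)).mul_const (Real.cos (φ - t))
    have hv := ((hw0.ofReal_comp).const_mul (Complex.I * (k:ℂ))).cexp
    exact hu.mul hv
  have hW'cont : Continuous W' := by
    rw [hW'def]
    apply Continuous.add
    · apply Continuous.mul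
      · fun_prop
      · apply Complex.continuous_exp.comp; fun_prop
    · apply Continuous.mul
      · fun_prop
      · apply Continuous.mul
        · apply Complex.continuous_exp.comp; fun_prop
        · fun_prop
  have hWftc : ∫ s in (0:ℝ)..1, W' s = W 1 - W 0 :=
    intervalIntegral.integral_eq_sub_of_hasDerivAt (fun s _ => hW s)
      (hW'cont.intervalIntegrable 0 1)
  have hRcont : Continuous (fun s : ℝ => Complex.I * k *
      (((f φ)^3 * s^2 * Real.sin (φ - t) : ℝ) : ℂ) *
      Complex.exp (Complex.I * k * ((f φ * s * Real.cos (φ - t) : ℝ) : ℂ))) := by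
    apply Continuous.mul
    · fun_prop
    · apply Complex.continuous_exp.comp; fun_prop
  have hsplit : ∀ s : ℝ, F' φ s = ((deriv f φ : ℝ) : ℂ) * W' s
      - Complex.I * k * (((f φ)^3 * s^2 * Real.sin (φ - t) : ℝ) : ℂ) *
          Complex.exp (Complex.I * k * ((f φ * s * Real.cos (φ - t) : ℝ) : ℂ)) := by
    intro s
    rw [hF', hW'def]
    push_cast
    ring
  have hval : ∫ s in (0:ℝ)..1, F' φ s
      = (((deriv f φ * f φ : ℝ)) : ℂ) *
          Complex.exp (Complex.I * k * ((f φ * Real.cos (φ - t) : ℝ) : ℂ))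
        - ∫ s in (0:ℝ)..1, Complex.I * k * (((f φ)^3 * s^2 * Real.sin (φ - t) : ℝ) : ℂ) *
            Complex.exp (Complex.I * k * ((f φ * s * Real.cos (φ - t) : ℝ) : ℂ)) := by
    have : (fun s : ℝ => F' φ s) = fun s => ((deriv f φ : ℝ) : ℂ) * W' s
        - Complex.I * k * (((f φ)^3 * s^2 * Real.sin (φ - t) : ℝ) : ℂ) *
            Complex.exp (Complex.I * k * ((f φ * s * Real.cos (φ - t) : ℝ) : ℂ)) :=
      funext hsplit
    rw [intervalIntegral.integral_congr (fun s _ => hsplit s)]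
    rw [intervalIntegral.integral_sub
      (by have hc : Continuous fun s => ((deriv f φ : ℝ) : ℂ) * W' s := continuous_const.mul hW'cont; exact hc.intervalIntegrable 0 1) (hRcont.intervalIntegrable 0 1)]
    rw [intervalIntegral.integral_const_mul, hWftc]
    congr 1
    have hW1 : W 1 = ((f φ : ℝ) : ℂ) *
        Complex.exp (Complex.I * k * ((f φ * Real.cos (φ - t) : ℝ) : ℂ)) := by
      rw [hWdef]
      norm_num
    have hW0 : W 0 = 0 := by
      rw [hWdef]; norm_num
    rw [hW1, hW0, sub_zero]
    push_cast
    ring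
  rw [hval] at hder
  exact hder

set_option maxHeartbeats 1000000 in
lemma G_real_zero (f : ℝ → ℝ) (hf : ContDiff ℝ (⊤ : ℕ∞) f)
    (hper : Function.Periodic f (2 * π))
    (c₂ : ℝ) (hfc : ∀ φ, 0 < f φ ∧ f φ ≤ c₂)
    (k : ℝ) (hk : 0 < k)
    (h : ∀ t : ℝ, ∫ z in {z : ℂ | ‖z‖ < f (Complex.arg z)},
      Complex.exp (Complex.I * k * ((Real.cos t * z.re + Real.sin t * z.im : ℝ) : ℂ)) = 0)
    (t : ℝ) :
    ∫ φ in (-π)..π, ((deriv f φ * f φ : ℝ) : ℂ) *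
      Complex.exp (Complex.I * k * ((f φ * Real.cos (φ - t) : ℝ) : ℂ)) = 0 := by
  have hfcont : Continuous f := hf.continuous
  have hderivcont : Continuous (deriv f) := hf.continuous_deriv (mod_cast le_top)
  have hc₂0 : 0 < c₂ := lt_of_lt_of_le (hfc 0).1 (hfc 0).2
  -- the pieces
  set B : ℝ → ℂ := fun φ => ((deriv f φ * f φ : ℝ) : ℂ) *
      Complex.exp (Complex.I * k * ((f φ * Real.cos (φ - t) : ℝ) : ℂ)) with hBdef
  set Rr : ℝ → ℂ := fun φ => ∫ s in (0:ℝ)..1,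
      Complex.I * k * (((f φ)^3 * s^2 * Real.sin (φ - t) : ℝ) : ℂ) *
        Complex.exp (Complex.I * k * ((f φ * s * Real.cos (φ - t) : ℝ) : ℂ)) with hRrdef
  set Htil : ℝ → ℂ := fun ψ => ∫ s in (0:ℝ)..1,
      (((f ψ)^2 * s : ℝ) : ℂ) *
        Complex.exp (Complex.I * k * ((f ψ * s * Real.cos (ψ - t) : ℝ) : ℂ)) with hHdef
  have hderiv : ∀ φ : ℝ, HasDerivAt Htil (B φ - Rr φ) φ := fun φ =>
    Htil_deriv f hf c₂ hfc k t hk φ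
  -- continuity
  have hBcont : Continuous B := by
    rw [hBdef]
    apply Continuous.mul
    · fun_prop
    · apply Complex.continuous_exp.comp; fun_prop
  have hRrcont : Continuous Rr := by
    rw [hRrdef]
    have hjoint : Continuous (Function.uncurry fun (φ : ℝ) (s : ℝ) =>
        Complex.I * (k:ℂ) * (((f φ)^3 * s^2 * Real.sin (φ - t) : ℝ) : ℂ) *
          Complex.exp (Complex.I * k * ((f φ * s * Real.cos (φ - t) : ℝ) : ℂ))) := by
      have : Continuous fun p : ℝ × ℝ =>
          Complex.I * (k:ℂ) * (((f p.1)^3 * p.2^2 * Real.sin (p.1 - t) : ℝ) : ℂ) *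
            Complex.exp (Complex.I * k * ((f p.1 * p.2 * Real.cos (p.1 - t) : ℝ) : ℂ)) := by
        apply Continuous.mul
        · fun_prop
        · apply Complex.continuous_exp.comp; fun_prop
      exact this
    exact intervalIntegral.continuous_parametric_intervalIntegral_of_continuous'
      (μ := volume) hjoint 0 1
  -- FTC over the period
  have hftc : ∫ φ in (-π)..π, (B φ - Rr φ) = Htil π - Htil (-π) :=
    intervalIntegral.integral_eq_sub_of_hasDerivAt (fun φ _ => hderiv φ)
      ((hBcont.sub hRrcont).intervalIntegrable _ _)
  have hHper : Htil π = Htil (-π) := by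
    have hfeq : f π = f (-π) := by
      have h0 := hper (-π)
      rw [show -π + 2*π = π by ring] at h0
      exact h0
    have hceq : Real.cos (π - t) = Real.cos (-π - t) := by
      rw [show -π - t = (π - t) - 2*π by ring, Real.cos_sub_two_pi]
    show (∫ s in (0:ℝ)..1, (((f π)^2 * s : ℝ) : ℂ) *
        Complex.exp (Complex.I * k * ((f π * s * Real.cos (π - t) : ℝ) : ℂ)))
      = ∫ s in (0:ℝ)..1, (((f (-π))^2 * s : ℝ) : ℂ) *
        Complex.exp (Complex.I * k * ((f (-π) * s * Real.cos (-π - t) : ℝ) : ℂ))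
    rw [hfeq, hceq]
  have hsub0 : ∫ φ in (-π)..π, (B φ - Rr φ) = 0 := by rw [hftc, hHper, sub_self]
  have hBR : ∫ φ in (-π)..π, B φ = ∫ φ in (-π)..π, Rr φ := by
    have : ∫ φ in (-π)..π, (B φ - Rr φ)
        = (∫ φ in (-π)..π, B φ) - ∫ φ in (-π)..π, Rr φ :=
      intervalIntegral.integral_sub (hBcont.intervalIntegrable (-π) π)
        (hRrcont.intervalIntegrable (-π) π)
    have h1 : (∫ φ in (-π)..π, B φ) - ∫ φ in (-π)..π, Rr φ = 0 := by
      rw [← this]; exact hsub0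
    exact sub_eq_zero.mp h1
  -- the polar side
  set w : ℂ → ℂ := fun z =>
    Complex.exp (Complex.I * k * ((Real.cos t * z.re + Real.sin t * z.im : ℝ) : ℂ)) *
      (Complex.I * k * ((-Real.sin t * z.re + Real.cos t * z.im : ℝ) : ℂ)) with hwdef
  have hwcont : Continuous w := by
    rw [hwdef]
    apply Continuous.mul
    · apply Complex.continuous_exp.comp; fun_prop
    · fun_prop
  have hwbound : ∀ z : ℂ, ‖z‖ ≤ c₂ → ‖w z‖ ≤ k * (2 * c₂) := by
    intro z hz
    have hre : |z.re| ≤ c₂ := le_trans (Complex.abs_re_le_norm z) hz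
    have him : |z.im| ≤ c₂ := le_trans (Complex.abs_im_le_norm z) hz
    rw [hwdef]
    have e1 : ‖Complex.exp (Complex.I * k *
        ((Real.cos t * z.re + Real.sin t * z.im : ℝ) : ℂ))‖ = 1 := norm_exp_I_mul k _
    simp only [norm_mul, e1, one_mul, Complex.norm_I, Complex.norm_real, Real.norm_eq_abs]
    rw [abs_of_pos hk]
    have b1 : |(-Real.sin t * z.re)| ≤ c₂ := by
      rw [abs_mul, abs_neg]
      calc |Real.sin t| * |z.re| ≤ 1 * c₂ :=
            mul_le_mul (Real.abs_sin_le_one t) hre (abs_nonneg _) zero_le_one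
        _ = c₂ := one_mul c₂
    have b2 : |(Real.cos t * z.im)| ≤ c₂ := by
      rw [abs_mul]
      calc |Real.cos t| * |z.im| ≤ 1 * c₂ :=
            mul_le_mul (Real.abs_cos_le_one t) him (abs_nonneg _) zero_le_one
        _ = c₂ := one_mul c₂
    have b3 : |(-Real.sin t * z.re + Real.cos t * z.im)| ≤ 2 * c₂ :=
      le_trans (abs_add_le _ _) (by linarith)
    exact mul_le_mul_of_nonneg_left b3 (le_of_lt hk)
  have hpolar := polar_change f hfcont c₂ hfc w hwcont (k * (2 * c₂)) hwbound
  -- pointwise identity for the inner integrals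
  have hpoint : ∀ φ : ℝ, Rr φ = ∫ r in (0:ℝ)..(f φ), (r:ℂ) * w (Complex.polarCoord.symm (r, φ)) := by
    intro φ
    have hA : 0 < f φ := (hfc φ).1
    set g : ℝ → ℂ := fun r => (r : ℂ) *
        (Complex.exp (Complex.I * k * ((r * Real.cos (φ - t) : ℝ) : ℂ)) *
          (Complex.I * k * ((r * Real.sin (φ - t) : ℝ) : ℂ))) with hgdef
    have hstep1 : ∫ r in (0:ℝ)..(f φ), (r:ℂ) * w (Complex.polarCoord.symm (r, φ))
        = ∫ r in (0:ℝ)..(f φ), g r := by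
      apply intervalIntegral.integral_congr
      intro r _
      simp only [hwdef, hgdef]
      have hre : (Complex.polarCoord.symm (r, φ)).re = r * Real.cos φ := by
        rw [Complex.polarCoord_symm_apply]
        simp [Complex.cos_ofReal_re, Complex.sin_ofReal_re]
      have him : (Complex.polarCoord.symm (r, φ)).im = r * Real.sin φ := by
        rw [Complex.polarCoord_symm_apply]
        simp [Complex.cos_ofReal_im, Complex.sin_ofReal_im, Complex.cos_ofReal_re,
          Complex.sin_ofReal_re]
      rw [hre, him]
      have e1 : Real.cos t * (r * Real.cos φ) + Real.sin t * (r * Real.sin φ)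
          = r * Real.cos (φ - t) := by rw [Real.cos_sub]; ring
      have e2 : -Real.sin t * (r * Real.cos φ) + Real.cos t * (r * Real.sin φ)
          = r * Real.sin (φ - t) := by rw [Real.sin_sub]; ring
      rw [e1, e2]
    have hstep2 : ∀ s : ℝ,
        Complex.I * k * (((f φ)^3 * s^2 * Real.sin (φ - t) : ℝ) : ℂ) *
          Complex.exp (Complex.I * k * ((f φ * s * Real.cos (φ - t) : ℝ) : ℂ))
        = ((f φ : ℝ) : ℂ) * g (f φ * s) := by
      intro s
      simp only [hgdef]
      push_cast
      ring
    rw [hstep1]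
    show (∫ s in (0:ℝ)..1,
        Complex.I * k * (((f φ)^3 * s^2 * Real.sin (φ - t) : ℝ) : ℂ) *
          Complex.exp (Complex.I * k * ((f φ * s * Real.cos (φ - t) : ℝ) : ℂ))) = _
    rw [intervalIntegral.integral_congr (fun s _ => hstep2 s)]
    rw [intervalIntegral.integral_const_mul]
    rw [intervalIntegral.integral_comp_mul_left g (ne_of_gt hA)]
    rw [mul_zero, mul_one, Complex.real_smul]
    rw [← mul_assoc]
    rw [← Complex.ofReal_mul, mul_inv_cancel₀ (ne_of_gt hA)]
    simp
  -- combine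
  have hJ := J_deriv_zero f hfcont c₂ hfc k hk h t
  have : ∫ φ in (-π)..π, Rr φ = 0 := by
    rw [intervalIntegral.integral_congr (fun φ _ => hpoint φ)]
    rw [← hpolar]
    exact hJ
  rw [hBdef] at hBR
  rw [hBR, this]

set_option maxHeartbeats 1000000 in
lemma G_entire (f : ℝ → ℝ) (hf : ContDiff ℝ (⊤ : ℕ∞) f) (k : ℝ) :
    Differentiable ℂ (fun θ : ℂ => ∫ φ in (-π)..π, ((deriv f φ * f φ : ℝ) : ℂ) *
      Complex.exp (Complex.I * k * (f φ : ℝ) *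
        ((Real.cos φ : ℂ) * Complex.cos θ + (Real.sin φ : ℂ) * Complex.sin θ))) := by
  have hfcont : Continuous f := hf.continuous
  have hderivcont : Continuous (deriv f) := hf.continuous_deriv (mod_cast le_top)
  intro θ₀
  set F : ℂ → ℝ → ℂ := fun θ φ => ((deriv f φ * f φ : ℝ) : ℂ) *
      Complex.exp (Complex.I * k * (f φ : ℝ) *
        ((Real.cos φ : ℂ) * Complex.cos θ + (Real.sin φ : ℂ) * Complex.sin θ)) with hFdef
  set F' : ℂ → ℝ → ℂ := fun θ φ => ((deriv f φ * f φ : ℝ) : ℂ) *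
      (Complex.exp (Complex.I * k * (f φ : ℝ) *
          ((Real.cos φ : ℂ) * Complex.cos θ + (Real.sin φ : ℂ) * Complex.sin θ)) *
        (Complex.I * k * (f φ : ℝ) *
          ((Real.cos φ : ℂ) * -Complex.sin θ + (Real.sin φ : ℂ) * Complex.cos θ))) with hF'def
  have hdiff : ∀ φ : ℝ, ∀ θ : ℂ, HasDerivAt (fun ϑ => F ϑ φ) (F' θ φ) θ := by
    intro φ θ
    have hc : HasDerivAt
        (fun ϑ : ℂ => (Real.cos φ : ℂ) * Complex.cos ϑ + (Real.sin φ : ℂ) * Complex.sin ϑ)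
        ((Real.cos φ : ℂ) * -Complex.sin θ + (Real.sin φ : ℂ) * Complex.cos θ) θ :=
      ((Complex.hasDerivAt_cos θ).const_mul ((Real.cos φ : ℂ))).add
        ((Complex.hasDerivAt_sin θ).const_mul ((Real.sin φ : ℂ)))
    have hv := (hc.const_mul (Complex.I * k * (f φ : ℝ))).cexp
    exact hv.const_mul _
  have hFjoint : Continuous fun p : ℂ × ℝ => F' p.1 p.2 := by
    rw [hF'def]
    apply Continuous.mul
    · fun_prop
    · apply Continuous.mul
      · apply Complex.continuous_exp.comp; fun_prop
      · fun_prop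
  have hK : IsCompact (Metric.closedBall θ₀ 1 ×ˢ Icc (-π) π) :=
    (isCompact_closedBall _ _).prod isCompact_Icc
  obtain ⟨C, hC⟩ := hK.exists_bound_of_continuousOn hFjoint.continuousOn
  have hFcont : ∀ θ : ℂ, Continuous (F θ) := by
    intro θ
    rw [hFdef]
    apply Continuous.mul
    · fun_prop
    · apply Complex.continuous_exp.comp; fun_prop
  have hF'cont : Continuous (F' θ₀) := hFjoint.comp (Continuous.prodMk_right θ₀)
  have hbound : ∀ᵐ φ ∂(volume : Measure ℝ), φ ∈ Set.uIoc (-π) π →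
      ∀ θ ∈ Metric.ball θ₀ 1, ‖F' θ φ‖ ≤ C := by
    filter_upwards with φ hφ θ hθ
    rw [Set.uIoc_of_le (by linarith [Real.pi_pos] : -π ≤ π)] at hφ
    exact hC (θ, φ) ⟨Metric.ball_subset_closedBall hθ, Ioc_subset_Icc_self hφ⟩
  have key := intervalIntegral.hasDerivAt_integral_of_dominated_loc_of_deriv_le
    (F := F) (F' := F') (x₀ := θ₀) (bound := fun _ => C) (a := -π) (b := π)
    (μ := volume) (Metric.ball_mem_nhds _ one_pos)
    (Filter.Eventually.of_forall fun θ => (hFcont θ).aestronglyMeasurable)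
    ((hFcont θ₀).intervalIntegrable _ _)
    (hF'cont.aestronglyMeasurable)
    hbound
    (intervalIntegrable_const)
    (Filter.Eventually.of_forall fun φ _ θ _ => hdiff φ θ)
  exact key.2.differentiableAt

set_option maxHeartbeats 1000000 in
/-- Lemma 3: let `D ⊂ ℝ² ≅ ℂ` be the bounded star-shaped (with respect to the origin)
domain whose boundary is given in polar coordinates by `r = f(φ)`, where `f` is a smooth
`2π`-periodic function with `0 < c₁ ≤ f ≤ c₂`, and let `k > 0`.  If
`∫_D e^{ik α·x} dx = 0` for every `α = (cos t, sin t) ∈ S¹`, then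
`∫_{-π}^{π} f'(φ) f(φ) e^{ik f(φ) cos(φ - θ)} dφ = 0` for every `θ ∈ ℂ`, where
`cos(φ - θ) = cos φ cos θ + sin φ sin θ` is the analytic extension of the cosine. -/
theorem integral_over_boundary_parametrization_vanishes
    (f : ℝ → ℝ) (hf : ContDiff ℝ (⊤ : ℕ∞) f)
    (hper : Function.Periodic f (2 * π))
    (c₁ c₂ : ℝ) (hc₁ : 0 < c₁) (hfc : ∀ φ, c₁ ≤ f φ ∧ f φ ≤ c₂)
    (k : ℝ) (hk : 0 < k)
    (D : Set ℂ)
    -- `D` is the star-shaped domain with boundary `r = f(φ)` in polar coordinates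
    (hD : D = {z : ℂ | ‖z‖ < f (Complex.arg z)})
    (h : ∀ t : ℝ, ∫ z in D,
      Complex.exp (Complex.I * k * ((Real.cos t * z.re + Real.sin t * z.im : ℝ) : ℂ)) = 0) :
    ∀ θ : ℂ, ∫ φ in (-π)..π, ((deriv f φ * f φ : ℝ) : ℂ) *
      Complex.exp (Complex.I * k * (f φ : ℝ) *
        ((Real.cos φ : ℂ) * Complex.cos θ + (Real.sin φ : ℂ) * Complex.sin θ)) = 0 := by
  subst hD
  intro θ
  have hfc' : ∀ φ, 0 < f φ ∧ f φ ≤ c₂ :=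
    fun φ => ⟨lt_of_lt_of_le hc₁ (hfc φ).1, (hfc φ).2⟩
  set G : ℂ → ℂ := fun θ => ∫ φ in (-π)..π, ((deriv f φ * f φ : ℝ) : ℂ) *
      Complex.exp (Complex.I * k * (f φ : ℝ) *
        ((Real.cos φ : ℂ) * Complex.cos θ + (Real.sin φ : ℂ) * Complex.sin θ)) with hGdef
  have hGdiff : Differentiable ℂ G := G_entire f hf k
  have hGreal : ∀ t : ℝ, G t = 0 := by
    intro t
    have hpt : ∀ φ ∈ Set.uIcc (-π) π, ((deriv f φ * f φ : ℝ) : ℂ) *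
        Complex.exp (Complex.I * k * (f φ : ℝ) *
          ((Real.cos φ : ℂ) * Complex.cos (t:ℂ) + (Real.sin φ : ℂ) * Complex.sin (t:ℂ)))
        = ((deriv f φ * f φ : ℝ) : ℂ) *
          Complex.exp (Complex.I * k * ((f φ * Real.cos (φ - t) : ℝ) : ℂ)) := by
      intro φ _
      congr 1
      congr 1
      push_cast [Complex.cos_sub]
      ring
    rw [hGdef]
    simp only
    rw [intervalIntegral.integral_congr hpt]
    exact G_real_zero f hf hper c₂ hfc' k hk h t
  -- analytic continuation
  have han : AnalyticOnNhd ℂ G Set.univ :=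
    Complex.analyticOnNhd_univ_iff_differentiable.mpr hGdiff
  have hu : Filter.Tendsto (fun n : ℕ => ((1 / (n + 1) : ℝ) : ℂ)) Filter.atTop
      (nhdsWithin 0 {(0:ℂ)}ᶜ) := by
    rw [tendsto_nhdsWithin_iff]
    constructor
    · have h2 := tendsto_one_div_add_atTop_nhds_zero_nat.ofReal
      simpa using h2
    · filter_upwards with n
      simp only [Set.mem_compl_iff, Set.mem_singleton_iff]
      intro hc
      have h3 : (1 / ((n:ℝ) + 1)) = 0 := by exact_mod_cast hc
      have h4 : (0:ℝ) < 1 / ((n:ℝ)+1) := by positivity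
      linarith
  have hfreq : ∃ᶠ z in nhdsWithin 0 {(0:ℂ)}ᶜ, G z = 0 :=
    hu.frequently (Filter.Frequently.of_forall fun n => hGreal _)
  have heq := han.eqOn_zero_of_preconnected_of_frequently_eq_zero isPreconnected_univ
    (Set.mem_univ (0:ℂ)) hfreq
  exact heq (Set.mem_univ θ)
end

section
/- Fix real numbers a and b. Then, as A → ∞ (with A > |a|), ∫_0^∞ e^{−s(a+A)} e^{i(s²+1)^{1/2} b} ds = (a + A)^{−1} e^{ib} (1 + O(A^{−1})); that is, (a+A) e^{−ib} ∫_0^∞ e^{−s(a+A)+i(s²+1)^{1/2} b} ds − 1 = O(A^{−1}) as A → ∞. -/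
open MeasureTheory Real Filter Asymptotics

lemma exp_I_mul_sub_one_norm (θ : ℝ) :
    ‖Complex.exp (Complex.I * (θ : ℂ)) - 1‖ ≤ 2 * |θ| := by
  have habs : ‖Complex.I * (θ : ℂ)‖ = |θ| := by
    simp
  rcases le_or_gt (|θ|) 1 with h | h
  · have := Complex.norm_exp_sub_one_le (x := Complex.I * (θ : ℂ)) (by rw [habs]; exact h)
    rw [habs] at this
    simpa using this
  · have h1 : ‖Complex.exp (Complex.I * (θ : ℂ))‖ = 1 := by
      rw [Complex.norm_exp]; simp
    calc ‖Complex.exp (Complex.I * (θ : ℂ)) - 1‖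
        ≤ ‖Complex.exp (Complex.I * (θ : ℂ))‖ + ‖(1 : ℂ)‖ := norm_sub_le _ _
      _ = 2 := by rw [h1]; norm_num
      _ ≤ 2 * |θ| := by nlinarith

lemma integral_exp_neg_mul_Ioi_zero {M : ℝ} (hM : 0 < M) :
    ∫ s in Set.Ioi (0 : ℝ), Real.exp (-M * s) = M⁻¹ := by
  have := integral_rpow_mul_exp_neg_mul_rpow (p := 1) (q := 0) (b := M)
    one_pos (by norm_num) hM
  simp only [Real.rpow_one, Real.rpow_zero, one_mul, zero_add] at this
  rw [this]
  rw [show (-(1:ℝ)/1) = -1 by norm_num, show ((1:ℝ)/1) = 1 by norm_num,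
    Real.rpow_neg_one, Real.Gamma_one]
  norm_num

lemma integral_mul_exp_neg_mul_Ioi_zero {M : ℝ} (hM : 0 < M) :
    ∫ s in Set.Ioi (0 : ℝ), s * Real.exp (-M * s) = M⁻¹ * M⁻¹ := by
  have := integral_rpow_mul_exp_neg_mul_rpow (p := 1) (q := 1) (b := M)
    one_pos (by norm_num) hM
  simp only [Real.rpow_one] at this
  rw [this]
  rw [show (-(1+1:ℝ)/1) = -2 by norm_num, show ((1:ℝ)+1)/1 = 2 by norm_num,
    Real.Gamma_two]
  rw [show (-2 : ℝ) = -(2:ℕ) by norm_num, Real.rpow_neg hM.le, Real.rpow_natCast]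
  ring

/-- Formula (7): for fixed real `a` and `b`, as `A → ∞`,
`∫_0^∞ e^{-s(a+A)} e^{i(s²+1)^{1/2} b} ds = (a+A)⁻¹ e^{ib} (1 + O(A⁻¹))`, i.e.
`(a+A) e^{-ib} ∫_0^∞ e^{-s(a+A) + i(s²+1)^{1/2} b} ds - 1 = O(A⁻¹)` as `A → ∞`. -/
theorem laplace_integral_asymptotics (a b : ℝ) :
    (fun A : ℝ =>
        ((a + A : ℝ) : ℂ) * Complex.exp (-(Complex.I * (b : ℂ))) *
          (∫ s in Set.Ioi (0 : ℝ), Complex.exp (((-(s * (a + A)) : ℝ) : ℂ) +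
            Complex.I * ((Real.sqrt (s ^ 2 + 1) * b : ℝ) : ℂ))) - 1)
      =O[atTop] (fun A : ℝ => A⁻¹) := by
  rw [isBigO_iff]
  refine ⟨4 * |b|, ?_⟩
  filter_upwards [eventually_ge_atTop (2 * |a| + 2 * |b| + 2)] with A hA
  have hb0 := abs_nonneg b
  have ha0 := abs_nonneg a
  have hA0 : (0:ℝ) < A := by linarith
  set M := a + A with hMdef
  have hM : 0 < M := by have := neg_abs_le a; simp only [hMdef]; linarith
  have hAM : A ≤ 2 * M := by have := neg_abs_le a; simp only [hMdef]; linarith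
  -- basic integrability facts
  have hInt0 : IntegrableOn (fun s : ℝ => Real.exp (-M * s)) (Set.Ioi 0) :=
    exp_neg_integrableOn_Ioi 0 hM
  have hInt1 : IntegrableOn (fun s : ℝ => s * Real.exp (-M * s)) (Set.Ioi 0) := by
    have := integrableOn_rpow_mul_exp_neg_mul_rpow (s := 1) (p := 1) (b := M)
      (by norm_num) one_pos hM
    simpa using this
  -- the main integrand and its integrability
  set f : ℝ → ℂ := fun s => Complex.exp (((-(s * M) : ℝ) : ℂ) +
    Complex.I * ((Real.sqrt (s ^ 2 + 1) * b : ℝ) : ℂ)) with hf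
  have hnormf : ∀ s : ℝ, ‖f s‖ = Real.exp (-M * s) := by
    intro s
    rw [hf, Complex.norm_exp]
    simp [mul_comm]
  have hcontf : Continuous f := by
    apply Complex.continuous_exp.comp
    fun_prop
  have hIntf : IntegrableOn f (Set.Ioi 0) := by
    refine Integrable.mono' hInt0 hcontf.aestronglyMeasurable ?_
    exact Filter.Eventually.of_forall fun s => (hnormf s).le
  -- the comparison integrand
  set g : ℝ → ℂ := fun s => ((Real.exp (-M * s) : ℝ) : ℂ) with hg
  have hIntg : IntegrableOn g (Set.Ioi 0) := hInt0.ofReal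
  have hgval : ∫ s in Set.Ioi (0:ℝ), g s = ((M⁻¹ : ℝ) : ℂ) := by
    have : ∫ s in Set.Ioi (0:ℝ), g s
        = ∫ s in Set.Ioi (0:ℝ), ((Real.exp (-M * s) : ℝ) : ℂ) := rfl
    rw [this, show ((M⁻¹ : ℝ) : ℂ)
        = ((∫ s in Set.Ioi (0:ℝ), Real.exp (-M * s) : ℝ) : ℂ) by
      rw [integral_exp_neg_mul_Ioi_zero hM]]
    exact integral_ofReal (𝕜 := ℂ)
  -- rewrite the expression
  have key : ((M : ℝ) : ℂ) * Complex.exp (-(Complex.I * (b : ℂ))) *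
      (∫ s in Set.Ioi (0 : ℝ), f s) - 1
      = ((M : ℝ) : ℂ) * ∫ s in Set.Ioi (0:ℝ),
          (Complex.exp (-(Complex.I * (b : ℂ))) * f s - g s) := by
    rw [integral_sub (hIntf.const_mul _) hIntg, hgval]
    have : ((M:ℝ) : ℂ) * ((M⁻¹ : ℝ) : ℂ) = 1 := by
      rw [← Complex.ofReal_mul, mul_inv_cancel₀ hM.ne']
      norm_num
    rw [mul_sub, this, integral_const_mul, ← mul_assoc]
  rw [key]
  -- pointwise bound
  have hpt : ∀ s ∈ Set.Ioi (0:ℝ),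
      ‖Complex.exp (-(Complex.I * (b : ℂ))) * f s - g s‖
        ≤ 2 * |b| * (s * Real.exp (-M * s)) := by
    intro s hs
    have hs0 : 0 < s := hs
    have hfact : Complex.exp (-(Complex.I * (b : ℂ))) * f s - g s
        = ((Real.exp (-M * s) : ℝ) : ℂ) *
          (Complex.exp (Complex.I * (((Real.sqrt (s ^ 2 + 1) - 1) * b : ℝ) : ℂ)) - 1) := by
      simp only [hf, hg]
      rw [mul_sub, mul_one, ← Complex.exp_add, Complex.ofReal_exp, ← Complex.exp_add]
      congr 1
      · congr 1
        push_cast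
        ring
    rw [hfact]
    rw [norm_mul]
    have h1 : ‖((Real.exp (-M * s) : ℝ) : ℂ)‖ = Real.exp (-M * s) := by
      rw [Complex.norm_real, Real.norm_eq_abs, Real.abs_exp]
    rw [h1]
    have hsq := Real.sq_sqrt (show (0:ℝ) ≤ s ^ 2 + 1 by positivity)
    have hnn := Real.sqrt_nonneg (s ^ 2 + 1)
    have hsqrt1 : 1 ≤ Real.sqrt (s ^ 2 + 1) := by nlinarith
    have hsqrt2 : Real.sqrt (s ^ 2 + 1) ≤ s + 1 := by nlinarith
    have hθ : |(Real.sqrt (s ^ 2 + 1) - 1) * b| ≤ s * |b| := by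
      rw [abs_mul, abs_of_nonneg (by linarith)]
      have : Real.sqrt (s ^ 2 + 1) - 1 ≤ s := by linarith
      exact mul_le_mul_of_nonneg_right this hb0
    calc Real.exp (-M * s) *
        ‖Complex.exp (Complex.I * (((Real.sqrt (s ^ 2 + 1) - 1) * b : ℝ) : ℂ)) - 1‖
        ≤ Real.exp (-M * s) * (2 * |(Real.sqrt (s ^ 2 + 1) - 1) * b|) := by
          exact mul_le_mul_of_nonneg_left (exp_I_mul_sub_one_norm _) (Real.exp_pos _).le
      _ ≤ Real.exp (-M * s) * (2 * (s * |b|)) := by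
          refine mul_le_mul_of_nonneg_left ?_ (Real.exp_pos _).le
          linarith
      _ = 2 * |b| * (s * Real.exp (-M * s)) := by ring
  -- integral bound
  have hbound : ‖∫ s in Set.Ioi (0:ℝ),
      (Complex.exp (-(Complex.I * (b : ℂ))) * f s - g s)‖
      ≤ 2 * |b| * (M⁻¹ * M⁻¹) := by
    have hIntbd : IntegrableOn (fun s : ℝ => 2 * |b| * (s * Real.exp (-M * s)))
        (Set.Ioi 0) := hInt1.const_mul _
    have := norm_integral_le_of_norm_le hIntbd
      (by
        filter_upwards [ae_restrict_mem measurableSet_Ioi] with s hs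
        exact hpt s hs)
    refine this.trans ?_
    rw [integral_const_mul, integral_mul_exp_neg_mul_Ioi_zero hM]
  -- conclude
  rw [norm_mul, Complex.norm_real, Real.norm_eq_abs, abs_of_pos hM]
  calc M * ‖∫ s in Set.Ioi (0:ℝ),
        (Complex.exp (-(Complex.I * (b : ℂ))) * f s - g s)‖
      ≤ M * (2 * |b| * (M⁻¹ * M⁻¹)) := mul_le_mul_of_nonneg_left hbound hM.le
    _ = 2 * |b| * M⁻¹ := by field_simp
    _ ≤ 4 * |b| * ‖A⁻¹‖ := by
        rw [Real.norm_eq_abs, abs_of_pos (inv_pos.mpr hA0)]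
        have hMinv : 1 / M ≤ 2 / A := by
          rw [div_le_div_iff₀ hM hA0]; linarith
        calc 2 * |b| * M⁻¹ = 2 * |b| * (1 / M) := by rw [one_div]
          _ ≤ 2 * |b| * (2 / A) := mul_le_mul_of_nonneg_left hMinv (by positivity)
          _ = 4 * |b| * A⁻¹ := by rw [div_eq_mul_inv]; ring
end
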